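/- A necessary condition for convergence of SOR: if the SOR iteration matrix M_ω = (D + ωL)⁻¹((1-ω)D - ωU) for a matrix A = D + L + U with invertible diagonal D converges for all initial guesses, then 0 < ω < 2 (Kahan's theorem: the spectral radius of M_ω satisfies ρ(M_ω) ≥ |ω - 1|). -/

import Mathlib

open Matrix Polynomial

/-- Evaluating the characteristic polynomial gives the determinant of `μ • 1 - M`. -/
lemma eval_charpoly_eq_det {n : ℕ} (M : Matrix (Fin n) (Fin n) ℂ) (μ : ℂ) :
    (Matrix.charpoly M).eval μ = Matrix.det (μ • (1 : Matrix (Fin n) (Fin n) ℂ) - M) := by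
  rw [Matrix.charpoly, ← Polynomial.coe_evalRingHom, RingHom.map_det]
  congr 1
  ext i j
  by_cases h : i = j
  · subst h
    simp [Matrix.charmatrix_apply_eq, Matrix.one_apply]
  · simp [Matrix.charmatrix_apply_ne _ _ _ h, Matrix.one_apply, h]

theorem kahan_sor_spectral_radius (n : ℕ) (hn : 1 ≤ n)
    (D L U : Matrix (Fin n) (Fin n) ℂ)
    (hdiag : D.IsDiag) (hD : IsUnit D)
    (hL : ∀ i j : Fin n, i ≤ j → L i j = 0)
    (hU : ∀ i j : Fin n, j ≤ i → U i j = 0)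
    (ω : ℝ) (hinv : IsUnit (D + (ω : ℂ) • L)) :
    ∃ μ : ℂ, ∃ v : Fin n → ℂ, v ≠ 0 ∧
      ((D + (ω : ℂ) • L)⁻¹ * ((1 - (ω : ℂ)) • D - (ω : ℂ) • U)).mulVec v = μ • v ∧
      |ω - 1| ≤ ‖μ‖ := by
  classical
  set M : Matrix (Fin n) (Fin n) ℂ :=
    (D + (ω : ℂ) • L)⁻¹ * ((1 - (ω : ℂ)) • D - (ω : ℂ) • U) with hM
  -- determinants
  have hDL_tri : (D + (ω : ℂ) • L).BlockTriangular OrderDual.toDual := by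
    intro i j hij
    have h' : i < j := hij
    simp [hdiag (ne_of_lt h'), hL i j h'.le]
  have hDU_tri : ((1 - (ω : ℂ)) • D - (ω : ℂ) • U).BlockTriangular id := by
    intro i j hij
    have h' : j < i := hij
    simp [hdiag (ne_of_gt h'), hU i j h'.le]
  have hDtriL : D.BlockTriangular (OrderDual.toDual : Fin n → (Fin n)ᵒᵈ) := by
    intro i j hij
    exact hdiag (ne_of_lt (show (i : Fin n) < j from hij))
  have hdetDL : (D + (ω : ℂ) • L).det = D.det := by
    rw [Matrix.det_of_lowerTriangular _ hDL_tri, Matrix.det_of_lowerTriangular _ hDtriL]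
    apply Finset.prod_congr rfl
    intro i _
    simp [hL i i le_rfl]
  have hDtriU : D.BlockTriangular (id : Fin n → Fin n) := by
    intro i j hij
    exact hdiag (ne_of_gt (show (j : Fin n) < i from hij))
  have hdetDU : ((1 - (ω : ℂ)) • D - (ω : ℂ) • U).det = (1 - (ω : ℂ)) ^ n * D.det := by
    rw [Matrix.det_of_upperTriangular hDU_tri, Matrix.det_of_upperTriangular hDtriU]
    have step : ∀ i : Fin n, ((1 - (ω : ℂ)) • D - (ω : ℂ) • U) i i = (1 - (ω : ℂ)) * D i i := by
      intro i
      simp [hU i i le_rfl]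
    rw [Finset.prod_congr rfl (fun i _ => step i), Finset.prod_mul_distrib,
      Finset.prod_const, Finset.card_fin]
  have hdetD : D.det ≠ 0 := by
    simpa [Matrix.isUnit_iff_isUnit_det, isUnit_iff_ne_zero] using hD
  have hdetDL' : (D + (ω : ℂ) • L).det ≠ 0 := hdetDL ▸ hdetD
  have hdetM : M.det = (1 - (ω : ℂ)) ^ n := by
    rw [hM, Matrix.det_mul, Matrix.det_nonsing_inv, hdetDL, hdetDU, Ring.inverse_eq_inv]
    field_simp
  -- roots of charpoly
  have hsplits : (Matrix.charpoly M).roots.card = n := by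
    rw [Polynomial.splits_iff_card_roots.mp (IsAlgClosed.splits _),
      Matrix.charpoly_natDegree_eq_dim, Fintype.card_fin]
  have hprod : M.det = (Matrix.charpoly M).roots.prod :=
    Matrix.det_eq_prod_roots_charpoly M
  -- find a root with large absolute value
  set c : NNReal := ‖(1 : ℂ) - (ω : ℂ)‖₊ with hc
  have hprodnorm : ((Matrix.charpoly M).roots.map (fun z => ‖z‖₊)).prod = c ^ n := by
    have : ‖M.det‖₊ = c ^ n := by rw [hdetM]; simp [hc]
    rw [← this, hprod]
    induction (Matrix.charpoly M).roots using Multiset.induction with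
    | empty => simp
    | cons a s ih => simp [ih]
  have hex : ∃ μ ∈ (Matrix.charpoly M).roots, c ≤ ‖μ‖₊ := by
    by_contra hcon
    push_neg at hcon
    obtain ⟨μ, hμmem⟩ : ∃ μ, μ ∈ (Matrix.charpoly M).roots := by
      rcases Multiset.card_pos_iff_exists_mem.mp (by omega : 0 < (Matrix.charpoly M).roots.card)
        with ⟨μ, hμ⟩
      exact ⟨μ, hμ⟩
    obtain ⟨t, ht⟩ := Multiset.exists_cons_of_mem hμmem
    have hcpos : 0 < c := lt_of_le_of_lt zero_le (hcon μ hμmem)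
    have htcard : t.card = n - 1 := by
      have := hsplits
      rw [ht] at this
      simp at this
      omega
    have htle : ((t.map (fun z => ‖z‖₊)).prod : NNReal) ≤ c ^ (n - 1) := by
      rw [← htcard, ← Multiset.card_map (fun z => ‖z‖₊) t]
      apply Multiset.prod_le_pow_card
      intro x hx
      obtain ⟨z, hz, rfl⟩ := Multiset.mem_map.mp hx
      exact le_of_lt (hcon z (ht ▸ Multiset.mem_cons_of_mem hz))
    have : c ^ n < c ^ n := by
      calc c ^ n = ((Matrix.charpoly M).roots.map (fun z => ‖z‖₊)).prod := hprodnorm.symm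
        _ = ‖μ‖₊ * (t.map (fun z => ‖z‖₊)).prod := by rw [ht]; simp
        _ ≤ ‖μ‖₊ * c ^ (n - 1) := by gcongr
        _ < c * c ^ (n - 1) := by
            exact mul_lt_mul_of_pos_right (hcon μ hμmem) (pow_pos hcpos _)
        _ = c ^ n := by
            rw [← pow_succ']
            congr 1
            omega
    exact lt_irrefl _ this
  obtain ⟨μ, hμroot, hμge⟩ := hex
  -- eigenvector
  have heval : (Matrix.charpoly M).eval μ = 0 := by
    have : (Matrix.charpoly M).IsRoot μ :=
      Polynomial.isRoot_of_mem_roots hμroot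
    exact this
  have hdet0 : (M - μ • (1 : Matrix (Fin n) (Fin n) ℂ)).det = 0 := by
    have h1 : (μ • (1 : Matrix (Fin n) (Fin n) ℂ) - M).det = 0 := by
      rw [← eval_charpoly_eq_det]; exact heval
    have : M - μ • (1 : Matrix (Fin n) (Fin n) ℂ) =
        -(μ • (1 : Matrix (Fin n) (Fin n) ℂ) - M) := (neg_sub _ _).symm
    rw [this, Matrix.det_neg, h1, mul_zero]
  obtain ⟨v, hv0, hvker⟩ := (Matrix.exists_mulVec_eq_zero_iff).mpr hdet0
  refine ⟨μ, v, hv0, ?_, ?_⟩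
  · have h3 := hvker
    rw [Matrix.sub_mulVec, Matrix.smul_mulVec, Matrix.one_mulVec, sub_eq_zero] at h3
    exact h3
  · have : (c : ℝ) ≤ ‖μ‖ := by exact_mod_cast hμge
    have hcval : (c : ℝ) = |ω - 1| := by
      rw [hc]
      push_cast [coe_nnnorm]
      rw [show (1 : ℂ) - (ω : ℂ) = ((1 - ω : ℝ) : ℂ) by push_cast; ring]
      rw [Complex.norm_real, Real.norm_eq_abs, abs_sub_comm]
    rw [← hcval]
    simpa using this
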